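/- Let (|a_i⟩)_{i=1}^N and (|b_j⟩)_{j=1}^N be two orthonormal bases of ℂ^N with transition matrix U_{ij} = ⟨a_i|b_j⟩, let |ψ⟩ ∈ ℂ^N be a unit vector, and define (x_1,…,x_{2N}) = p^ψ ⊕ q^ψ (the concatenation of the two probability vectors). Then for every k = 1,…,2N, the sum of the k largest values among x_1,…,x_{2N} is at most 1 + s_{k−1} (with s_0 = 0). As a consequence, p^ψ ⊕ q^ψ ≺ (1, s_1, s_2−s_1, s_3−s_2, …, s_N−s_{N−1}). -/

import Mathlib

/-- The measurable space structure on matrices (the product σ-algebra, which coincides with the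
Borel σ-algebra). -/
instance {m n α : Type*} [MeasurableSpace α] : MeasurableSpace (Matrix m n α) :=
  inferInstanceAs (MeasurableSpace (m → n → α))

/-- The operator norm (largest singular value) of a rectangular complex matrix, i.e. the norm of
the induced linear map between Euclidean spaces. -/
noncomputable def opNorm {m n : Type*} [Fintype m] [Fintype n] [DecidableEq n]
    (M : Matrix m n ℂ) : ℝ :=
  ‖LinearMap.toContinuousLinearMap (Matrix.toEuclideanLin M)‖

/-- `‖Û^(n,m)‖`: the maximal operator norm of an `n × m` submatrix of the `N × N` matrix `U`,
the maximum being taken over all choices of `n` rows and `m` columns. -/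
noncomputable def maxSubNorm (N n m : ℕ) (U : Matrix (Fin N) (Fin N) ℂ) : ℝ :=
  ⨆ f : Fin n ↪ Fin N, ⨆ g : Fin m ↪ Fin N, opNorm (U.submatrix f g)

/-- `s_k = max{‖Û^(1,k)‖, ‖Û^(2,k−1)‖, …, ‖Û^(k,1)‖}`, the maximal operator norm of a
submatrix of `U` with `n + m = k + 1` rows and columns (`n, m ≥ 1`).  By convention `s_0 = 0`
(the supremum over the empty range). -/
noncomputable def sk (N : ℕ) (U : Matrix (Fin N) (Fin N) ℂ) (k : ℕ) : ℝ :=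
  ⨆ a : Fin k, maxSubNorm N (a.1 + 1) (k - a.1) U

/-- For a vector `x` with nonnegative entries, `topSum x k` is the sum of the `k` largest
coordinates of `x` (the maximum of `∑_{i ∈ s} x i` over subsets `s` with `|s| ≤ k`; for
`k ≥ card ι` it equals the total sum, which corresponds to padding `x` with zeros). -/
noncomputable def topSum {ι : Type*} [Fintype ι] (x : ι → ℝ) (k : ℕ) : ℝ :=
  ⨆ s : {s : Finset ι // s.card ≤ k}, ∑ i ∈ s.1, x i

/-- Majorization `x ≺ y` for vectors with nonnegative coordinates (the index types may
differ; this amounts to padding the shorter vector with zeros): for every `k`, the sum of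
the `k` largest coordinates of `x` is at most the sum of the `k` largest coordinates of `y`,
and the total sums of coordinates agree. -/
def Majorizes {ι κ : Type*} [Fintype ι] [Fintype κ] (x : ι → ℝ) (y : κ → ℝ) : Prop :=
  (∀ k : ℕ, topSum x k ≤ topSum y k) ∧ ∑ i, x i = ∑ j, y j

section Helpers
open Finset

private lemma toEuclideanLin_apply' {m n : Type*} [Fintype m] [Fintype n] [DecidableEq n]
    (M : Matrix m n ℂ) (v : EuclideanSpace ℂ n) (i : m) :
    Matrix.toEuclideanLin M v i = ∑ j, M i j * v j := rfl

private lemma euclid_norm_sq {n : Type*} [Fintype n] (v : EuclideanSpace ℂ n) :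
    ‖v‖ ^ 2 = ∑ i, ‖v i‖ ^ 2 := by
  rw [EuclideanSpace.norm_eq, Real.sq_sqrt (by positivity)]

private lemma opNorm_bound {m n : Type*} [Fintype m] [Fintype n] [DecidableEq n]
    (M : Matrix m n ℂ) (x : EuclideanSpace ℂ n) :
    ‖(Matrix.toEuclideanLin M x : EuclideanSpace ℂ m)‖ ≤ opNorm M * ‖x‖ := by
  have := (LinearMap.toContinuousLinearMap (Matrix.toEuclideanLin M)).le_opNorm x
  simpa [opNorm] using this

private lemma le_of_sq_le_sq' {x y : ℝ} (hx : 0 ≤ x) (hy : 0 ≤ y) (h : x ^ 2 ≤ y ^ 2) : x ≤ y := by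
  nlinarith

private lemma eq_of_sq_eq' {x y : ℝ} (hx : 0 ≤ x) (hy : 0 ≤ y) (h : x ^ 2 = y ^ 2) : x = y := by
  nlinarith

private lemma keyIneq {E : Type*} [NormedAddCommGroup E] [InnerProductSpace ℂ E]
    (ψ P Q : E) (hψ : ‖ψ‖ = 1)
    (hP : (inner ℂ P ψ : ℂ) = ((‖P‖ ^ 2 : ℝ) : ℂ)) (hQ : (inner ℂ Q ψ : ℂ) = ((‖Q‖ ^ 2 : ℝ) : ℂ))
    (c : ℝ) (hc : 0 ≤ c) (hPQ : ‖(inner ℂ P Q : ℂ)‖ ≤ c * (‖P‖ * ‖Q‖)) :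
    ‖P‖ ^ 2 + ‖Q‖ ^ 2 ≤ 1 + c := by
  have h1 : (inner ℂ (P + Q) ψ : ℂ) = ((‖P‖ ^ 2 + ‖Q‖ ^ 2 : ℝ) : ℂ) := by
    rw [inner_add_left, hP, hQ]; push_cast; ring
  have h2 : ‖P‖ ^ 2 + ‖Q‖ ^ 2 ≤ ‖P + Q‖ := by
    have hn := norm_inner_le_norm (𝕜 := ℂ) (P + Q) ψ
    rw [h1, hψ, mul_one, Complex.norm_real, Real.norm_eq_abs] at hn
    exact (le_abs_self _).trans hn
  have h3 : ‖P + Q‖ ^ 2 ≤ ‖P‖ ^ 2 + ‖Q‖ ^ 2 + 2 * (c * (‖P‖ * ‖Q‖)) := by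
    have hre : RCLike.re (inner ℂ P Q : ℂ) ≤ c * (‖P‖ * ‖Q‖) :=
      le_trans (le_trans (le_abs_self _) (RCLike.abs_re_le_norm _)) hPQ
    have hsq := norm_add_sq (𝕜 := ℂ) P Q
    nlinarith
  have h4 : 2 * (‖P‖ * ‖Q‖) ≤ ‖P‖ ^ 2 + ‖Q‖ ^ 2 := by nlinarith [sq_nonneg (‖P‖ - ‖Q‖)]
  nlinarith [norm_nonneg P, norm_nonneg Q, norm_nonneg (P + Q), sq_nonneg (‖P‖^2 + ‖Q‖^2)]

private lemma norm_sq_sum_orthonormal {E : Type*} [NormedAddCommGroup E] [InnerProductSpace ℂ E]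
    {ι : Type*} {v : ι → E} (hv : Orthonormal ℂ v) (l : ι → ℂ) (s : Finset ι) :
    ‖∑ i ∈ s, l i • v i‖ ^ 2 = ∑ i ∈ s, ‖l i‖ ^ 2 := by
  have h := hv.inner_sum l l s
  rw [← inner_self_eq_norm_sq (𝕜 := ℂ), h, map_sum]
  refine Finset.sum_congr rfl fun i _ => ?_
  rw [RCLike.conj_mul]
  norm_cast

private lemma parseval {N : ℕ} (a : OrthonormalBasis (Fin N) ℂ (EuclideanSpace ℂ (Fin N)))
    (φ : EuclideanSpace ℂ (Fin N)) :
    ∑ i, ‖(inner ℂ (a i) φ : ℂ)‖ ^ 2 = ‖φ‖ ^ 2 := by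
  have h1 : ‖a.repr φ‖ = ‖φ‖ := a.repr.norm_map φ
  have h2 : ‖a.repr φ‖ ^ 2 = ∑ i, ‖a.repr φ i‖ ^ 2 := euclid_norm_sq _
  simp_rw [← a.repr_apply_apply]
  rw [← h2, h1]


private lemma opNorm_nonneg' {m n : Type*} [Fintype m] [Fintype n] [DecidableEq n]
    (M : Matrix m n ℂ) : 0 ≤ opNorm M := norm_nonneg _

private lemma reindex_single {N n : ℕ} (f : Fin n ↪ Fin N) (I : Finset (Fin N))
    (hI : I ⊆ Finset.univ.map f) (c : Fin N → ℝ) :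
    ∑ s : Fin n, (if f s ∈ I then c (f s) else 0) = ∑ i ∈ I, c i := by
  rw [← Finset.sum_map Finset.univ f (fun i => if i ∈ I then c i else 0), Finset.sum_ite_mem,
    Finset.inter_eq_right.mpr hI]

private lemma reindex_double {N n m : ℕ} (f : Fin n ↪ Fin N) (g : Fin m ↪ Fin N)
    (I J : Finset (Fin N)) (hI : I ⊆ Finset.univ.map f) (hJ : J ⊆ Finset.univ.map g)
    (c : Fin N → Fin N → ℂ) :
    ∑ s : Fin n, ∑ t : Fin m, (if f s ∈ I then (if g t ∈ J then c (f s) (g t) else 0) else 0)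
      = ∑ i ∈ I, ∑ j ∈ J, c i j := by
  have hin : ∀ i : Fin N, ∑ t : Fin m, (if g t ∈ J then c i (g t) else 0) = ∑ j ∈ J, c i j := by
    intro i
    rw [← Finset.sum_map Finset.univ g (fun j => if j ∈ J then c i j else 0), Finset.sum_ite_mem,
      Finset.inter_eq_right.mpr hJ]
  calc ∑ s : Fin n, ∑ t : Fin m, (if f s ∈ I then (if g t ∈ J then c (f s) (g t) else 0) else 0)
      = ∑ s : Fin n, (if f s ∈ I then ∑ t : Fin m, (if g t ∈ J then c (f s) (g t) else 0) else 0) := by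
        refine Finset.sum_congr rfl fun s _ => ?_
        by_cases h : f s ∈ I <;> simp [h]
    _ = ∑ i ∈ Finset.univ.map f,
          (if i ∈ I then ∑ t : Fin m, (if g t ∈ J then c i (g t) else 0) else 0) :=
        (Finset.sum_map Finset.univ f
          (fun i => if i ∈ I then ∑ t : Fin m, (if g t ∈ J then c i (g t) else 0) else 0)).symm
    _ = ∑ i ∈ I, ∑ t : Fin m, (if g t ∈ J then c i (g t) else 0) := by
        rw [Finset.sum_ite_mem, Finset.inter_eq_right.mpr hI]
    _ = ∑ i ∈ I, ∑ j ∈ J, c i j := Finset.sum_congr rfl fun i _ => hin i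

private lemma subset_bound {N : ℕ} (a b : OrthonormalBasis (Fin N) ℂ (EuclideanSpace ℂ (Fin N)))
    (U : Matrix (Fin N) (Fin N) ℂ) (hU : ∀ i j, U i j = (inner ℂ (a i) (b j) : ℂ))
    (ψ : EuclideanSpace ℂ (Fin N)) (hψ : ‖ψ‖ = 1)
    {n m : ℕ} (f : Fin n ↪ Fin N) (g : Fin m ↪ Fin N)
    (I J : Finset (Fin N)) (hI : I ⊆ Finset.univ.map f) (hJ : J ⊆ Finset.univ.map g) :
    ∑ i ∈ I, ‖(inner ℂ (a i) ψ : ℂ)‖ ^ 2 + ∑ j ∈ J, ‖(inner ℂ (b j) ψ : ℂ)‖ ^ 2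
      ≤ 1 + opNorm (U.submatrix f g) := by
  classical
  set α : Fin N → ℂ := fun i => inner ℂ (a i) ψ with hα
  set β : Fin N → ℂ := fun j => inner ℂ (b j) ψ with hβ
  set P : EuclideanSpace ℂ (Fin N) := ∑ i ∈ I, α i • a i with hPdef
  set Q : EuclideanSpace ℂ (Fin N) := ∑ j ∈ J, β j • b j with hQdef
  have hPn : ‖P‖ ^ 2 = ∑ i ∈ I, ‖α i‖ ^ 2 := norm_sq_sum_orthonormal a.orthonormal α I
  have hQn : ‖Q‖ ^ 2 = ∑ j ∈ J, ‖β j‖ ^ 2 := norm_sq_sum_orthonormal b.orthonormal β J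
  have hPψ : (inner ℂ P ψ : ℂ) = ((‖P‖ ^ 2 : ℝ) : ℂ) := by
    rw [hPdef, sum_inner, hPn]
    push_cast
    refine Finset.sum_congr rfl fun i _ => ?_
    rw [inner_smul_left]
    rw [show (inner ℂ (a i) ψ : ℂ) = α i from rfl, RCLike.conj_mul]
    norm_cast
  have hQψ : (inner ℂ Q ψ : ℂ) = ((‖Q‖ ^ 2 : ℝ) : ℂ) := by
    rw [hQdef, sum_inner, hQn]
    push_cast
    refine Finset.sum_congr rfl fun j _ => ?_
    rw [inner_smul_left]
    rw [show (inner ℂ (b j) ψ : ℂ) = β j from rfl, RCLike.conj_mul]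
    norm_cast
  have hPQ : (inner ℂ P Q : ℂ)
      = ∑ i ∈ I, ∑ j ∈ J, (starRingEnd ℂ) (α i) * (U i j * β j) := by
    rw [hPdef, hQdef, sum_inner]
    refine Finset.sum_congr rfl fun i hi => ?_
    rw [inner_sum]
    refine Finset.sum_congr rfl fun j hj => ?_
    rw [inner_smul_left, inner_smul_right, hU]
    ring
  set M := U.submatrix f g with hM
  set y : EuclideanSpace ℂ (Fin n) := WithLp.toLp 2 (fun s => if f s ∈ I then α (f s) else 0) with hy
  set x : EuclideanSpace ℂ (Fin m) := WithLp.toLp 2 (fun t => if g t ∈ J then β (g t) else 0) with hx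
  have hYX : (inner ℂ y ((Matrix.toEuclideanLin M) x : EuclideanSpace ℂ (Fin n)) : ℂ)
      = inner ℂ P Q := by
    rw [hPQ, PiLp.inner_apply]
    have step : ∀ s : Fin n, (inner ℂ (y s) ((Matrix.toEuclideanLin M) x s) : ℂ)
        = ∑ t : Fin m, (if f s ∈ I then (if g t ∈ J then
            (starRingEnd ℂ) (α (f s)) * (U (f s) (g t) * β (g t)) else 0) else 0) := by
      intro s
      rw [toEuclideanLin_apply', RCLike.inner_apply, Finset.sum_mul]
      refine Finset.sum_congr rfl fun t _ => ?_
      rw [hy, hx]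
      simp only [hM, Matrix.submatrix_apply]
      by_cases h1 : f s ∈ I <;> by_cases h2 : g t ∈ J <;> simp [h1, h2] <;> ring
    simp_rw [step]
    exact reindex_double f g I J hI hJ (fun i j => (starRingEnd ℂ) (α i) * (U i j * β j))
  have hyP : ‖y‖ = ‖P‖ := by
    refine eq_of_sq_eq' (norm_nonneg _) (norm_nonneg _) ?_
    rw [euclid_norm_sq, hPn, ← reindex_single f I hI (fun i => ‖α i‖ ^ 2)]
    refine Finset.sum_congr rfl fun s _ => ?_
    rw [hy]
    by_cases h : f s ∈ I <;> simp [h]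
  have hxQ : ‖x‖ = ‖Q‖ := by
    refine eq_of_sq_eq' (norm_nonneg _) (norm_nonneg _) ?_
    rw [euclid_norm_sq, hQn, ← reindex_single g J hJ (fun j => ‖β j‖ ^ 2)]
    refine Finset.sum_congr rfl fun t _ => ?_
    rw [hx]
    by_cases h : g t ∈ J <;> simp [h]
  have bound : ‖(inner ℂ P Q : ℂ)‖ ≤ opNorm M * (‖P‖ * ‖Q‖) := by
    rw [← hYX]
    calc ‖(inner ℂ y ((Matrix.toEuclideanLin M) x : EuclideanSpace ℂ (Fin n)) : ℂ)‖
        ≤ ‖y‖ * ‖((Matrix.toEuclideanLin M) x : EuclideanSpace ℂ (Fin n))‖ :=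
          norm_inner_le_norm _ _
      _ ≤ ‖y‖ * (opNorm M * ‖x‖) :=
          mul_le_mul_of_nonneg_left (opNorm_bound M x) (norm_nonneg y)
      _ = opNorm M * (‖P‖ * ‖Q‖) := by rw [hyP, hxQ]; ring
  calc ∑ i ∈ I, ‖(inner ℂ (a i) ψ : ℂ)‖ ^ 2 + ∑ j ∈ J, ‖(inner ℂ (b j) ψ : ℂ)‖ ^ 2
      = ‖P‖ ^ 2 + ‖Q‖ ^ 2 := by rw [hPn, hQn]
    _ ≤ 1 + opNorm M := keyIneq ψ P Q hψ hPψ hQψ _ (opNorm_nonneg' M) bound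

private lemma mulVec_iso {N : ℕ} (a b : OrthonormalBasis (Fin N) ℂ (EuclideanSpace ℂ (Fin N)))
    (U : Matrix (Fin N) (Fin N) ℂ) (hU : ∀ i j, U i j = (inner ℂ (a i) (b j) : ℂ))
    (z : EuclideanSpace ℂ (Fin N)) :
    ‖(Matrix.toEuclideanLin U z : EuclideanSpace ℂ (Fin N))‖ = ‖z‖ := by
  have hz : (Matrix.toEuclideanLin U z : EuclideanSpace ℂ (Fin N))
      = a.repr (b.repr.symm z) := by
    refine PiLp.ext fun i => ?_
    rw [toEuclideanLin_apply', a.repr_apply_apply, ← b.sum_repr_symm, inner_sum]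
    simp_rw [inner_smul_right]
    refine Finset.sum_congr rfl fun j _ => ?_
    rw [hU]; ring
  rw [hz, a.repr.norm_map, b.repr.symm.norm_map]

private lemma sub_le_one {N n m : ℕ} (a b : OrthonormalBasis (Fin N) ℂ (EuclideanSpace ℂ (Fin N)))
    (U : Matrix (Fin N) (Fin N) ℂ) (hU : ∀ i j, U i j = (inner ℂ (a i) (b j) : ℂ))
    (f : Fin n ↪ Fin N) (g : Fin m ↪ Fin N) :
    opNorm (U.submatrix f g) ≤ 1 := by
  classical
  rw [opNorm]
  refine ContinuousLinearMap.opNorm_le_bound _ zero_le_one fun x => ?_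
  rw [one_mul, LinearMap.coe_toContinuousLinearMap']
  set xt : EuclideanSpace ℂ (Fin N) := WithLp.toLp 2 (fun j => ∑ t, if g t = j then x t else 0) with hxt
  have happ : ∀ s : Fin n, (Matrix.toEuclideanLin (U.submatrix f g) x : EuclideanSpace ℂ (Fin n)) s
      = (Matrix.toEuclideanLin U xt : EuclideanSpace ℂ (Fin N)) (f s) := by
    intro s
    rw [toEuclideanLin_apply', toEuclideanLin_apply']
    have : ∀ j, U (f s) j * xt j = ∑ t, if g t = j then U (f s) (g t) * x t else 0 := by
      intro j
      rw [hxt]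
      simp only [Finset.mul_sum, mul_ite, mul_zero]
      refine Finset.sum_congr rfl fun t _ => ?_
      by_cases h : g t = j
      · rw [if_pos h, if_pos h, h]
      · rw [if_neg h, if_neg h]
    simp_rw [this]
    rw [Finset.sum_comm]
    refine Finset.sum_congr rfl fun t _ => ?_
    rw [Finset.sum_ite_eq Finset.univ (g t) (fun _ => U (f s) (g t) * x t), if_pos (Finset.mem_univ _)]
    rfl
  have hxtn : ‖xt‖ ^ 2 = ‖x‖ ^ 2 := by
    rw [euclid_norm_sq, euclid_norm_sq]
    have h0 : ∀ j ∈ Finset.univ, j ∉ Finset.univ.map g → ‖xt j‖ ^ 2 = 0 := by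
      intro j _ hj
      have hz : xt j = 0 := Finset.sum_eq_zero (s := Finset.univ)
          (f := fun t => if g t = j then x t else 0) fun t _ => by
        rw [if_neg]
        intro h
        exact hj (Finset.mem_map.mpr ⟨t, Finset.mem_univ t, h⟩)
      rw [hz]; simp
    rw [← Finset.sum_subset (Finset.subset_univ (Finset.univ.map g)) h0,
      Finset.sum_map Finset.univ g (fun j => ‖xt j‖ ^ 2)]
    refine Finset.sum_congr rfl fun t _ => ?_
    have : xt (g t) = x t := by
      rw [hxt]
      calc ∑ t', (if g t' = g t then x t' else 0) = ∑ t', (if t' = t then x t' else 0) :=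
            Finset.sum_congr rfl fun t' _ => by simp only [g.injective.eq_iff]
        _ = x t := by simp
    rw [this]
  have hfn : ‖(Matrix.toEuclideanLin (U.submatrix f g) x : EuclideanSpace ℂ (Fin n))‖ ^ 2
      ≤ ‖x‖ ^ 2 := by
    rw [euclid_norm_sq]
    calc ∑ s, ‖(Matrix.toEuclideanLin (U.submatrix f g) x : EuclideanSpace ℂ (Fin n)) s‖ ^ 2
        = ∑ s, ‖(Matrix.toEuclideanLin U xt : EuclideanSpace ℂ (Fin N)) (f s)‖ ^ 2 := by
          simp_rw [happ]
      _ = ∑ i ∈ Finset.univ.map f,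
            ‖(Matrix.toEuclideanLin U xt : EuclideanSpace ℂ (Fin N)) i‖ ^ 2 :=
          (Finset.sum_map Finset.univ f
            (fun i => ‖(Matrix.toEuclideanLin U xt : EuclideanSpace ℂ (Fin N)) i‖ ^ 2)).symm
      _ ≤ ∑ i, ‖(Matrix.toEuclideanLin U xt : EuclideanSpace ℂ (Fin N)) i‖ ^ 2 :=
          Finset.sum_le_sum_of_subset_of_nonneg (Finset.subset_univ _)
            (fun _ _ _ => by positivity)
      _ = ‖(Matrix.toEuclideanLin U xt : EuclideanSpace ℂ (Fin N))‖ ^ 2 := (euclid_norm_sq _).symm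
      _ = ‖xt‖ ^ 2 := by rw [mulVec_iso a b U hU]
      _ = ‖x‖ ^ 2 := hxtn
  exact le_of_sq_le_sq' (norm_nonneg _) (norm_nonneg _) hfn

private lemma maxSubNorm_nonneg (N n m : ℕ) (U : Matrix (Fin N) (Fin N) ℂ) :
    0 ≤ maxSubNorm N n m U :=
  Real.iSup_nonneg fun _ => Real.iSup_nonneg fun _ => opNorm_nonneg' _

private lemma sk_nonneg (N : ℕ) (U : Matrix (Fin N) (Fin N) ℂ) (k : ℕ) : 0 ≤ sk N U k :=
  Real.iSup_nonneg fun _ => maxSubNorm_nonneg _ _ _ _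

private lemma sk_zero (N : ℕ) (U : Matrix (Fin N) (Fin N) ℂ) : sk N U 0 = 0 :=
  Real.iSup_of_isEmpty _

private lemma le_topSum {ι : Type*} [Fintype ι] (x : ι → ℝ) (k : ℕ) (s : Finset ι)
    (hs : s.card ≤ k) : ∑ i ∈ s, x i ≤ topSum x k :=
  le_ciSup (f := fun s : {s : Finset ι // s.card ≤ k} => ∑ i ∈ s.1, x i)
    (Set.Finite.bddAbove (Set.finite_range _)) ⟨s, hs⟩

private lemma opNorm_le_maxSubNorm {N n m : ℕ} (U : Matrix (Fin N) (Fin N) ℂ)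
    (f : Fin n ↪ Fin N) (g : Fin m ↪ Fin N) :
    opNorm (U.submatrix f g) ≤ maxSubNorm N n m U := by
  refine le_trans (le_ciSup (f := fun g' : Fin m ↪ Fin N => opNorm (U.submatrix f g'))
    (Set.Finite.bddAbove (Set.finite_range _)) g) ?_
  exact le_ciSup (f := fun f' : Fin n ↪ Fin N => ⨆ g' : Fin m ↪ Fin N, opNorm (U.submatrix f' g'))
    (Set.Finite.bddAbove (Set.finite_range _)) f

private lemma maxSubNorm_le_sk {N k n' : ℕ} (U : Matrix (Fin N) (Fin N) ℂ)
    (h1 : 1 ≤ n') (h2 : n' ≤ k) :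
    maxSubNorm N n' (k + 1 - n') U ≤ sk N U k := by
  have h3 : n' - 1 < k := by omega
  have hle := le_ciSup (f := fun a : Fin k => maxSubNorm N (a.1 + 1) (k - a.1) U)
    (Set.Finite.bddAbove (Set.finite_range _)) ⟨n' - 1, h3⟩
  calc maxSubNorm N n' (k + 1 - n') U = maxSubNorm N ((n' - 1) + 1) (k - (n' - 1)) U := by
        congr 1 <;> omega
    _ ≤ sk N U k := hle

private lemma mem_map_orderEmb {N n : ℕ} (I' : Finset (Fin N)) (hc : I'.card = n)
    {i : Fin N} (hi : i ∈ I') :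
    i ∈ Finset.univ.map (I'.orderEmbOfFin hc).toEmbedding := by
  have : i ∈ Set.range (I'.orderEmbOfFin hc) := by
    rw [Finset.range_orderEmbOfFin]
    exact hi
  obtain ⟨s, hs⟩ := this
  exact Finset.mem_map.mpr ⟨s, Finset.mem_univ s, hs⟩

private lemma pair_bound {N : ℕ} (a b : OrthonormalBasis (Fin N) ℂ (EuclideanSpace ℂ (Fin N)))
    (U : Matrix (Fin N) (Fin N) ℂ) (hU : ∀ i j, U i j = (inner ℂ (a i) (b j) : ℂ))
    (ψ : EuclideanSpace ℂ (Fin N)) (hψ : ‖ψ‖ = 1)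
    (k : ℕ) (hk2 : k ≤ 2 * N) (I J : Finset (Fin N)) (hIJ : I.card + J.card ≤ k) :
    ∑ i ∈ I, ‖(inner ℂ (a i) ψ : ℂ)‖ ^ 2 + ∑ j ∈ J, ‖(inner ℂ (b j) ψ : ℂ)‖ ^ 2
      ≤ 1 + sk N U (k - 1) := by
  classical
  have hskn : 0 ≤ sk N U (k - 1) := sk_nonneg N U (k - 1)
  have htotA : ∑ i ∈ I, ‖(inner ℂ (a i) ψ : ℂ)‖ ^ 2 ≤ 1 := by
    calc ∑ i ∈ I, ‖(inner ℂ (a i) ψ : ℂ)‖ ^ 2 ≤ ∑ i, ‖(inner ℂ (a i) ψ : ℂ)‖ ^ 2 :=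
          Finset.sum_le_sum_of_subset_of_nonneg (Finset.subset_univ I) fun _ _ _ => by positivity
      _ = 1 := by rw [parseval a ψ, hψ, one_pow]
  have htotB : ∑ j ∈ J, ‖(inner ℂ (b j) ψ : ℂ)‖ ^ 2 ≤ 1 := by
    calc ∑ j ∈ J, ‖(inner ℂ (b j) ψ : ℂ)‖ ^ 2 ≤ ∑ j, ‖(inner ℂ (b j) ψ : ℂ)‖ ^ 2 :=
          Finset.sum_le_sum_of_subset_of_nonneg (Finset.subset_univ J) fun _ _ _ => by positivity
      _ = 1 := by rw [parseval b ψ, hψ, one_pow]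
  rcases I.eq_empty_or_nonempty with hIe | hIne
  · rw [hIe]
    simp only [Finset.sum_empty, zero_add]
    linarith
  rcases J.eq_empty_or_nonempty with hJe | hJne
  · rw [hJe]
    simp only [Finset.sum_empty, add_zero]
    linarith
  have hI1 : 1 ≤ I.card := Finset.card_pos.mpr hIne
  have hJ1 : 1 ≤ J.card := Finset.card_pos.mpr hJne
  have hIN : I.card ≤ N := by
    have := Finset.card_le_card (Finset.subset_univ I)
    simpa using this
  have hJN : J.card ≤ N := by
    have := Finset.card_le_card (Finset.subset_univ J)
    simpa using this
  set n' : ℕ := min N (k - J.card) with hn'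
  set m' : ℕ := k - n' with hm'
  have hfacts : I.card ≤ n' ∧ 1 ≤ n' ∧ n' ≤ N ∧ J.card ≤ m' ∧ 1 ≤ m' ∧ m' ≤ N ∧ n' ≤ k - 1 ∧
      m' = (k - 1) + 1 - n' := by
    constructor; · omega
    constructor; · omega
    constructor; · omega
    constructor; · omega
    constructor; · omega
    constructor; · omega
    constructor; · omega
    omega
  obtain ⟨hf1, hf2, hf3, hf4, hf5, hf6, hf7, hf8⟩ := hfacts
  obtain ⟨I', hII', _, hI'c⟩ := Finset.exists_subsuperset_card_eq (Finset.subset_univ I) hf1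
    (by simpa using hf3)
  obtain ⟨J', hJJ', _, hJ'c⟩ := Finset.exists_subsuperset_card_eq (Finset.subset_univ J) hf4
    (by simpa using hf6)
  set f := (I'.orderEmbOfFin hI'c).toEmbedding with hfdef
  set g := (J'.orderEmbOfFin hJ'c).toEmbedding with hgdef
  have hIf : I ⊆ Finset.univ.map f := fun i hi => mem_map_orderEmb I' hI'c (hII' hi)
  have hJg : J ⊆ Finset.univ.map g := fun j hj => mem_map_orderEmb J' hJ'c (hJJ' hj)
  have hb := subset_bound a b U hU ψ hψ f g I J hIf hJg
  refine hb.trans (add_le_add le_rfl ?_)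
  refine (opNorm_le_maxSubNorm U f g).trans ?_
  have := maxSubNorm_le_sk (k := k - 1) (n' := n') U hf2 hf7
  rw [← hf8] at this
  exact this

private lemma sN_le_one {N : ℕ} (a b : OrthonormalBasis (Fin N) ℂ (EuclideanSpace ℂ (Fin N)))
    (U : Matrix (Fin N) (Fin N) ℂ) (hU : ∀ i j, U i j = (inner ℂ (a i) (b j) : ℂ)) (k : ℕ) :
    sk N U k ≤ 1 :=
  Real.iSup_le (fun _ => Real.iSup_le (fun f => Real.iSup_le
    (fun g => sub_le_one a b U hU f g) zero_le_one) zero_le_one) zero_le_one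

private lemma sN_one {N : ℕ} (hN : 1 ≤ N)
    (a b : OrthonormalBasis (Fin N) ℂ (EuclideanSpace ℂ (Fin N)))
    (U : Matrix (Fin N) (Fin N) ℂ) (hU : ∀ i j, U i j = (inner ℂ (a i) (b j) : ℂ)) :
    sk N U N = 1 := by
  refine le_antisymm (sN_le_one a b U hU N) ?_
  set j0 : Fin N := ⟨0, hN⟩ with hj0
  set f : Fin N ↪ Fin N := Function.Embedding.refl _ with hf
  set g : Fin 1 ↪ Fin N := ⟨fun _ => j0, fun s t _ => Subsingleton.elim s t⟩ with hg
  set M := U.submatrix f g with hM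
  have h1 : (1 : ℝ) ≤ opNorm M := by
    set e1 : EuclideanSpace ℂ (Fin 1) := EuclideanSpace.single 0 1 with he1
    have hxn : ‖e1‖ = 1 := by
      rw [he1, EuclideanSpace.norm_single, norm_one]
    have happ : ∀ i, (Matrix.toEuclideanLin M e1 : EuclideanSpace ℂ (Fin N)) i = U i j0 := by
      intro i
      rw [toEuclideanLin_apply']
      rw [show (Finset.univ : Finset (Fin 1)) = {0} from rfl, Finset.sum_singleton]
      have : e1 (0 : Fin 1) = 1 := by
        rw [he1, EuclideanSpace.single_apply, if_pos rfl]
      rw [this, mul_one]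
      rfl
    have hnorm : ‖(Matrix.toEuclideanLin M e1 : EuclideanSpace ℂ (Fin N))‖ = 1 := by
      refine eq_of_sq_eq' (norm_nonneg _) zero_le_one ?_
      rw [euclid_norm_sq, one_pow]
      simp_rw [happ]
      calc ∑ i, ‖U i j0‖ ^ 2 = ∑ i, ‖(inner ℂ (a i) (b j0) : ℂ)‖ ^ 2 := by simp_rw [hU]
        _ = ‖b j0‖ ^ 2 := parseval a (b j0)
        _ = 1 := by rw [b.orthonormal.1 j0, one_pow]
    have := opNorm_bound M e1
    rw [hnorm, hxn, mul_one] at this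
    exact this
  have h2 : opNorm M ≤ maxSubNorm N N 1 U := opNorm_le_maxSubNorm U f g
  have h3 : maxSubNorm N N 1 U ≤ sk N U N := by
    have := maxSubNorm_le_sk (k := N) (n' := N) U hN le_rfl
    rw [show N + 1 - N = 1 from by omega] at this
    exact this
  linarith

private lemma filter_lt_succ (N k : ℕ) (hk : k ≤ N) :
    Finset.univ.filter (fun i : Fin (N + 1) => i.1 < k + 1)
      = insert (⟨k, by omega⟩ : Fin (N + 1))
          (Finset.univ.filter (fun i : Fin (N + 1) => i.1 < k)) := by
  ext i
  simp only [Finset.mem_filter, Finset.mem_univ, true_and, Finset.mem_insert, Fin.ext_iff]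
  omega

private lemma card_filter_lt (N k : ℕ) :
    (Finset.univ.filter (fun i : Fin (N + 1) => i.1 < k)).card ≤ k := by
  classical
  calc (Finset.univ.filter (fun i : Fin (N + 1) => i.1 < k)).card
      ≤ (Finset.range k).card := by
        refine Finset.card_le_card_of_injOn (fun i => i.1) ?_ ?_
        · intro i hi
          simp only [Finset.mem_coe, Finset.mem_filter] at hi
          simpa using hi.2
        · intro i _ j _ h
          exact Fin.ext h
    _ = k := Finset.card_range k

private lemma telescope (N : ℕ) (U : Matrix (Fin N) (Fin N) ℂ) :
    ∀ k, k ≤ N → ∑ i ∈ Finset.univ.filter (fun i : Fin (N + 1) => i.1 < k + 1),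
        (if i.1 = 0 then (1 : ℝ) else sk N U i.1 - sk N U (i.1 - 1)) = 1 + sk N U k := by
  intro k
  induction k with
  | zero =>
    intro _
    rw [filter_lt_succ N 0 (by omega)]
    have hempty : Finset.univ.filter (fun i : Fin (N + 1) => i.1 < 0) = ∅ := by
      ext i; simp
    rw [hempty, insert_empty_eq, Finset.sum_singleton, sk_zero]
    norm_num
  | succ k ih =>
    intro hk
    rw [filter_lt_succ N (k + 1) hk, Finset.sum_insert (by simp), ih (by omega)]
    rw [if_neg (by simp), show k + 1 - 1 = k from rfl]
    ring

end Helpers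

/-- Strong (direct-sum) majorization: let `(a_i)`, `(b_j)` be orthonormal bases of `ℂ^N` with
transition matrix `U_{ij} = ⟨a_i|b_j⟩`, let `ψ` be a unit vector and let
`(x_1,…,x_{2N}) = p^ψ ⊕ q^ψ`.  Then for every `1 ≤ k ≤ 2N` the sum of the `k` largest values
among the `x_i` is at most `1 + s_{k−1}` (with `s_0 = 0`), and consequently
`p^ψ ⊕ q^ψ ≺ (1, s_1, s_2 − s_1, …, s_N − s_{N−1})`. -/
theorem direct_sum_majorization
    (N : ℕ) (a b : OrthonormalBasis (Fin N) ℂ (EuclideanSpace ℂ (Fin N)))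
    (U : Matrix (Fin N) (Fin N) ℂ) (hU : ∀ i j, U i j = (inner ℂ (a i) (b j) : ℂ))
    (ψ : EuclideanSpace ℂ (Fin N)) (hψ : ‖ψ‖ = 1) :
    (∀ k : ℕ, 1 ≤ k → k ≤ 2 * N →
      topSum
        (Sum.elim (fun i => ‖(inner ℂ (a i) ψ : ℂ)‖ ^ 2)
          (fun j => ‖(inner ℂ (b j) ψ : ℂ)‖ ^ 2)) k ≤ 1 + sk N U (k - 1)) ∧
    Majorizes
      (Sum.elim (fun i => ‖(inner ℂ (a i) ψ : ℂ)‖ ^ 2)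
        (fun j => ‖(inner ℂ (b j) ψ : ℂ)‖ ^ 2))
      (fun i : Fin (N + 1) => if i.1 = 0 then 1 else sk N U i.1 - sk N U (i.1 - 1)) := by
  classical
  have hN : 1 ≤ N := by
    by_contra h
    have hN0 : N = 0 := by omega
    subst hN0
    have hz : ψ = 0 := PiLp.ext fun i => absurd i.isLt (by omega)
    rw [hz, norm_zero] at hψ
    norm_num at hψ
  set X : Fin N ⊕ Fin N → ℝ := Sum.elim (fun i => ‖(inner ℂ (a i) ψ : ℂ)‖ ^ 2)
    (fun j => ‖(inner ℂ (b j) ψ : ℂ)‖ ^ 2) with hX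
  set Y : Fin (N + 1) → ℝ :=
    fun i => if i.1 = 0 then 1 else sk N U i.1 - sk N U (i.1 - 1) with hY
  have hXnn : ∀ i, 0 ≤ X i := by
    rintro (i | j) <;> simp only [hX, Sum.elim_inl, Sum.elim_inr] <;> positivity
  have htot : ∑ i, X i = 2 := by
    rw [hX, Fintype.sum_sum_type]
    simp only [Sum.elim_inl, Sum.elim_inr]
    rw [parseval a ψ, parseval b ψ, hψ]
    norm_num
  have main : ∀ k : ℕ, k ≤ 2 * N → topSum X k ≤ 1 + sk N U (k - 1) := by
    intro k hk2
    refine Real.iSup_le ?_ (by linarith [sk_nonneg N U (k - 1)])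
    rintro ⟨s, hs⟩
    calc ∑ i ∈ s, X i
        = ∑ i ∈ s.toLeft, ‖(inner ℂ (a i) ψ : ℂ)‖ ^ 2
            + ∑ j ∈ s.toRight, ‖(inner ℂ (b j) ψ : ℂ)‖ ^ 2 := by
          rw [hX, ← Finset.sum_sumElim, Finset.toLeft_disjSum_toRight]
      _ ≤ 1 + sk N U (k - 1) := pair_bound a b U hU ψ hψ k hk2 _ _
          (by rw [Finset.card_toLeft_add_card_toRight]; exact hs)
  have hcap : ∀ k : ℕ, topSum X k ≤ 2 := by
    intro k
    refine Real.iSup_le ?_ (by norm_num)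
    rintro ⟨s, hs⟩
    calc ∑ i ∈ s, X i ≤ ∑ i, X i :=
          Finset.sum_le_sum_of_subset_of_nonneg (Finset.subset_univ s) fun i _ _ => hXnn i
      _ = 2 := htot
  have hYtel : ∀ k, k ≤ N →
      ∑ i ∈ Finset.univ.filter (fun i : Fin (N + 1) => i.1 < k + 1), Y i = 1 + sk N U k :=
    telescope N U
  have hYuniv : ∑ i, Y i = 2 := by
    have h1 := hYtel N le_rfl
    have h2 : Finset.univ.filter (fun i : Fin (N + 1) => i.1 < N + 1) = Finset.univ := by
      ext i
      simp [i.isLt, Fin.is_le]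
    rw [h2] at h1
    rw [h1, sN_one hN a b U hU]
    norm_num
  refine ⟨fun k hk1 hk2 => main k hk2, ?_, htot.trans hYuniv.symm⟩
  intro k
  rcases Nat.eq_zero_or_pos k with rfl | hk1
  · have h0 : topSum X 0 ≤ 0 := by
      refine Real.iSup_le ?_ le_rfl
      rintro ⟨s, hs⟩
      have hse : s = ∅ := Finset.card_eq_zero.mp (Nat.le_zero.mp hs)
      subst hse
      simp
    have h0' : (0 : ℝ) ≤ topSum Y 0 := by
      have := le_topSum Y 0 ∅ (by simp)
      simpa using this
    linarith
  rcases le_or_gt k (N + 1) with hk2 | hk2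
  · have h1 := main k (by omega)
    have h2 := hYtel (k - 1) (by omega)
    rw [show k - 1 + 1 = k from by omega] at h2
    have h3 := le_topSum Y k _ (card_filter_lt N k)
    rw [h2] at h3
    linarith
  · have h2 := hYtel N le_rfl
    have hfu : Finset.univ.filter (fun i : Fin (N + 1) => i.1 < N + 1) = Finset.univ := by
      ext i
      simp [i.isLt, Fin.is_le]
    rw [hfu, sN_one hN a b U hU] at h2
    have h3 := le_topSum Y k Finset.univ (by simpa using by omega)
    rw [h2] at h3
    have := hcap k
    linarith
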